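/- For every natural number n ≥ 1, every natural number k with 0 ≤ k ≤ n, and every nonzero complex number z: 2(n+1) z^{2n−1} P_{n−k}(J(z)) = C_k^{(n)}(z) G_n(z) + D_k^{(n)}(z) F_n(z). -/

import Mathlib

open Polynomial Finset

/-- The degree-`n` Legendre polynomial (over `ℂ`), defined by the Rodrigues formula
`P_n(x) = (1/(2^n n!)) dⁿ/dxⁿ (x²−1)ⁿ`. -/
noncomputable def legendre (n : ℕ) : Polynomial ℂ :=
  Polynomial.C (1 / (2 ^ n * n.factorial : ℂ)) *
    Polynomial.derivative^[n] ((Polynomial.X ^ 2 - 1) ^ n)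

/-- `P_n(z)`, the value of the degree-`n` Legendre polynomial at `z ∈ ℂ`. -/
noncomputable def P (n : ℕ) (z : ℂ) : ℂ := (legendre n).eval z

/-- `P_n'(z)`, the value of the derivative of the degree-`n` Legendre polynomial at `z ∈ ℂ`. -/
noncomputable def P' (n : ℕ) (z : ℂ) : ℂ := (Polynomial.derivative (legendre n)).eval z

/-- The Joukowski map `J(z) = (z + 1/z)/2`. -/
noncomputable def J (z : ℂ) : ℂ := (z + 1 / z) / 2

/-- `F_n(z) = (n+1) zⁿ P_n(J(z)) + (z^{n−1}(z²−1)/2) P_n'(J(z))`. -/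
noncomputable def F (n : ℕ) (z : ℂ) : ℂ :=
  (n + 1) * z ^ (n : ℤ) * P n (J z) + z ^ ((n : ℤ) - 1) * (z ^ 2 - 1) / 2 * P' n (J z)

/-- `G_n(z) = z^{2n} F_n(1/z)`. -/
noncomputable def G (n : ℕ) (z : ℂ) : ℂ := z ^ (2 * n) * F n (1 / z)

/-- The Laurent polynomials `C_k^{(n)}`: `C_0 = z^{n−1}`, `C_1 = z^{n−2}((2n+1)z² − 1)/(2n)`,
and for `1 ≤ k ≤ n−1`, `(n−k) C_{k+1} = (2(n−k)+1) J(z) C_k − (n−k+1) C_{k−1}`. -/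
noncomputable def Cf (n : ℕ) : ℕ → ℂ → ℂ
  | 0 => fun z => z ^ ((n : ℤ) - 1)
  | 1 => fun z => z ^ ((n : ℤ) - 2) * ((2 * n + 1) * z ^ 2 - 1) / (2 * n)
  | (k + 2) => fun z =>
      ((2 * ((n : ℂ) - (k + 1)) + 1) * J z * Cf n (k + 1) z -
          ((n : ℂ) - (k + 1) + 1) * Cf n k z) / ((n : ℂ) - (k + 1))

/-- The Laurent polynomials `D_k^{(n)}`: `D_0 = z^{n−1}`, `D_1 = z^{n−2}((2n+1) − z²)/(2n)`,
and for `1 ≤ k ≤ n−1`, `(n−k) D_{k+1} = (2(n−k)+1) J(z) D_k − (n−k+1) D_{k−1}`. -/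
noncomputable def Df (n : ℕ) : ℕ → ℂ → ℂ
  | 0 => fun z => z ^ ((n : ℤ) - 1)
  | 1 => fun z => z ^ ((n : ℤ) - 2) * ((2 * n + 1) - z ^ 2) / (2 * n)
  | (k + 2) => fun z =>
      ((2 * ((n : ℂ) - (k + 1)) + 1) * J z * Df n (k + 1) z -
          ((n : ℂ) - (k + 1) + 1) * Df n k z) / ((n : ℂ) - (k + 1))


lemma C2 : (C (2:ℂ) : Polynomial ℂ) = 2 := map_ofNat C 2

noncomputable def uu (n : ℕ) : Polynomial ℂ := (X ^ 2 - 1) ^ n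
noncomputable def V (n : ℕ) : Polynomial ℂ := derivative^[n] (uu n)
noncomputable def T (n : ℕ) : Polynomial ℂ := derivative^[n] (uu (n + 1))

lemma iter_succ (n : ℕ) (p : Polynomial ℂ) :
    derivative^[n + 1] p = derivative^[n] (derivative p) :=
  Function.iterate_succ_apply _ n p

lemma iter_succ' (n : ℕ) (p : Polynomial ℂ) :
    derivative^[n + 1] p = derivative (derivative^[n] p) :=
  Function.iterate_succ_apply' _ n p

lemma iter_two (n : ℕ) (p : Polynomial ℂ) :
    derivative^[n] (2 * p) = 2 * derivative^[n] p := by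
  rw [← C2, Polynomial.iterate_derivative_C_mul]

lemma leib1 (n : ℕ) (p : Polynomial ℂ) :
    derivative^[n + 1] (X * p) =
      X * derivative^[n + 1] p + ((n : Polynomial ℂ) + 1) * derivative^[n] p := by
  induction n generalizing p with
  | zero => simp [derivative_mul]; ring
  | succ n ih =>
    rw [iter_succ (n + 1), derivative_mul, derivative_X, one_mul, iterate_map_add, ih,
      ← iter_succ, ← iter_succ, iter_succ n p]
    push_cast
    ring

lemma leib2 (n : ℕ) (p : Polynomial ℂ) :
    derivative^[n + 2] ((X ^ 2 - 1) * p) =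
      (X ^ 2 - 1) * derivative^[n + 2] p
        + 2 * ((n : Polynomial ℂ) + 2) * (X * derivative^[n + 1] p)
        + ((n : Polynomial ℂ) + 2) * ((n : Polynomial ℂ) + 1) * derivative^[n] p := by
  have hder : ∀ q : Polynomial ℂ,
      derivative ((X ^ 2 - 1) * q) = 2 * (X * q) + (X ^ 2 - 1) * derivative q := by
    intro q; simp [derivative_mul, C2]; ring
  induction n generalizing p with
  | zero =>
    simp only [Function.iterate_succ_apply', Function.iterate_zero_apply, hder, derivative_mul,
      derivative_add, derivative_X, derivative_one, derivative_sub, derivative_pow, C2,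
      derivative_ofNat]
    push_cast
    ring
  | succ n ih =>
    rw [iter_succ (n + 2), hder, iterate_map_add, ih, show (2 : Polynomial ℂ) * (X * p)
      = X * (2 * p) by ring, leib1 (n + 1), iter_two, iter_two, ← iter_succ, ← iter_succ,
      ← iter_succ, iter_succ (n + 1) p]
    push_cast
    ring

lemma deriv_uu (n : ℕ) : derivative (uu (n + 1)) =
    ((2 * (n + 1) : ℕ) : Polynomial ℂ) * (X * uu n) := by
  simp [uu, derivative_pow, C2]
  push_cast
  ring

lemma uu_succ (n : ℕ) : uu (n + 1) = (X ^ 2 - 1) * uu n := by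
  simp [uu, pow_succ]; ring

lemma R1 (n : ℕ) : V (n + 2) = 2 * ((n : Polynomial ℂ) + 2) * (X * V (n + 1))
    + 2 * ((n : Polynomial ℂ) + 2) * ((n : Polynomial ℂ) + 1) * T n := by
  have h0 : V (n + 2) = derivative^[n + 1] (derivative (uu (n + 2))) := iter_succ _ _
  rw [h0, deriv_uu (n + 1), iterate_derivative_natCast_mul, leib1 n]
  simp only [V, T]
  push_cast
  ring

lemma R2 (n : ℕ) : V (n + 2) = (X ^ 2 - 1) * derivative (V (n + 1))
    + 2 * ((n : Polynomial ℂ) + 2) * (X * V (n + 1))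
    + ((n : Polynomial ℂ) + 2) * ((n : Polynomial ℂ) + 1) * T n := by
  have h : V (n + 2) = derivative^[n + 2] ((X ^ 2 - 1) * uu (n + 1)) := by
    rw [V, uu_succ]
  rw [h, leib2 n (uu (n + 1))]
  simp only [V, T]
  rw [← iter_succ' (n + 1)]

lemma Tlem (n : ℕ) : ((n : Polynomial ℂ) + 2) * ((n : Polynomial ℂ) + 1) * T n
    = (X ^ 2 - 1) * derivative (V (n + 1)) := by
  linear_combination R2 n - R1 n

lemma IprimeV (n : ℕ) : V (n + 2) = 2 * ((n : Polynomial ℂ) + 2) * (X * V (n + 1))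
    + 2 * ((X ^ 2 - 1) * derivative (V (n + 1))) := by
  linear_combination R1 n + 2 * Tlem n

lemma Araw (n : ℕ) : derivative (V (n + 1)) =
    2 * ((n : Polynomial ℂ) + 1) * (X * derivative (V n) + ((n : Polynomial ℂ) + 1) * V n) := by
  have h : derivative (V (n + 1)) = derivative^[n + 1] (derivative (uu (n + 1))) := by
    rw [V, ← iter_succ' , iter_succ (n + 1)]
  rw [h, deriv_uu n, iterate_derivative_natCast_mul, leib1 n]
  simp only [V]
  rw [← iter_succ' n]
  push_cast
  ring

lemma Craw (n : ℕ) : X * derivative (V (n + 1)) =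
    ((n : Polynomial ℂ) + 1) * V (n + 1) + 2 * ((n : Polynomial ℂ) + 1) * derivative (V n) := by
  have key : X * derivative (uu (n + 1)) =
      ((2 * (n + 1) : ℕ) : Polynomial ℂ) * uu (n + 1)
        + ((2 * (n + 1) : ℕ) : Polynomial ℂ) * uu n := by
    rw [deriv_uu n, uu_succ]
    push_cast
    ring
  have h1 : derivative^[n + 1] (X * derivative (uu (n + 1)))
      = X * derivative (V (n + 1)) + ((n : Polynomial ℂ) + 1) * V (n + 1) := by
    rw [leib1 n (derivative (uu (n + 1))), ← iter_succ, ← iter_succ]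
    simp only [V]
    rw [iter_succ' (n + 1)]
  have h2 : derivative^[n + 1] (X * derivative (uu (n + 1)))
      = 2 * ((n : Polynomial ℂ) + 1) * V (n + 1)
        + 2 * ((n : Polynomial ℂ) + 1) * derivative (V n) := by
    rw [key, iterate_map_add, iterate_derivative_natCast_mul, iterate_derivative_natCast_mul]
    simp only [V]
    rw [iter_succ' n (uu n)]
    push_cast
    ring
  linear_combination h1.symm.trans h2

lemma cn_ne (n : ℕ) : ((2:ℂ) ^ n * n.factorial) ≠ 0 :=
  mul_ne_zero (pow_ne_zero _ two_ne_zero) (Nat.cast_ne_zero.mpr n.factorial_ne_zero)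

lemma V_eq (n : ℕ) : V n = C ((2:ℂ) ^ n * n.factorial) * legendre n := by
  rw [legendre, ← mul_assoc, ← C_mul, mul_one_div, div_self (cn_ne n), map_one, one_mul]
  rfl

lemma C_succ_eq (n : ℕ) : (C ((2:ℂ) ^ (n+1) * (n+1).factorial) : Polynomial ℂ)
    = 2 * ((n : Polynomial ℂ) + 1) * C ((2:ℂ) ^ n * n.factorial) := by
  rw [Nat.factorial_succ, show ((2:ℂ)^(n+1) * ((n+1) * n.factorial : ℕ)) =
    (2 * ((n:ℂ)+1)) * ((2:ℂ)^n * n.factorial) by push_cast; ring, C_mul]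
  simp [map_add, map_mul, map_one, map_ofNat, C_eq_natCast]

lemma LA (n : ℕ) : derivative (legendre (n + 1)) =
    X * derivative (legendre n) + ((n : Polynomial ℂ) + 1) * legendre n := by
  apply mul_left_cancel₀ (a := (C ((2:ℂ) ^ (n+1) * (n+1).factorial) : Polynomial ℂ))
    (by simpa using cn_ne (n+1))
  have h := Araw n
  simp only [V_eq, derivative_C_mul] at h
  rw [C_succ_eq] at h
  rw [C_succ_eq]
  linear_combination h

lemma LC (n : ℕ) : derivative (legendre n) =
    X * derivative (legendre (n + 1)) - ((n : Polynomial ℂ) + 1) * legendre (n + 1) := by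
  apply mul_left_cancel₀ (a := (C ((2:ℂ) ^ (n+1) * (n+1).factorial) : Polynomial ℂ))
    (by simpa using cn_ne (n+1))
  have h := Craw n
  simp only [V_eq, derivative_C_mul] at h
  rw [C_succ_eq] at h
  rw [C_succ_eq]
  linear_combination -h

lemma LIp (n : ℕ) : ((n : Polynomial ℂ) + 2) * legendre (n + 2) =
    ((n : Polynomial ℂ) + 2) * X * legendre (n + 1)
      + (X ^ 2 - 1) * derivative (legendre (n + 1)) := by
  apply mul_left_cancel₀ (a := (C ((2:ℂ) ^ (n+2) * (n+2).factorial) : Polynomial ℂ))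
    (by simpa using cn_ne (n+2))
  have h := IprimeV n
  simp only [V_eq, derivative_C_mul] at h
  rw [C_succ_eq (n+1), C_succ_eq n] at h
  rw [C_succ_eq (n+1), C_succ_eq n]
  push_cast at h ⊢
  linear_combination ((n : Polynomial ℂ) + 2) * h

lemma legendre_zero : legendre 0 = 1 := by
  simp [legendre]

lemma legendre_one : legendre 1 = X := by
  simp only [legendre, pow_one, Function.iterate_one, derivative_sub, derivative_one,
    derivative_X_pow, sub_zero]
  rw [← mul_assoc, ← C_mul]
  norm_num

lemma legendre_eval_one (n : ℕ) : (legendre n).eval 1 = 1 := by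
  induction n using Nat.twoStepInduction with
  | zero => simp [legendre_zero]
  | one => simp [legendre_one]
  | more n ih1 ih2 =>
    have h := congrArg (eval 1) (LIp n)
    simp only [eval_mul, eval_add, eval_sub, eval_natCast, eval_ofNat, eval_X, eval_one,
      eval_pow, ih2] at h
    have hn2 : ((n : ℂ) + 2) ≠ 0 := by
      have h2 : ((n : ℂ) + 2) = ((n + 2 : ℕ) : ℂ) := by push_cast; ring
      rw [h2]
      exact Nat.cast_ne_zero.mpr (by omega)
    norm_num at h
    exact mul_left_cancel₀ hn2 (h.trans (mul_one _).symm)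
lemma bonnet (n : ℕ) : ((n : Polynomial ℂ) + 2) * legendre (n + 2) =
    (2 * (n : Polynomial ℂ) + 3) * X * legendre (n + 1) - ((n : Polynomial ℂ) + 1) * legendre n := by
  have h1 := LA (n + 1)
  have h2 := LC n
  set p : Polynomial ℂ := ((n : Polynomial ℂ) + 2) * legendre (n + 2)
    - ((2 * (n : Polynomial ℂ) + 3) * X * legendre (n + 1) - ((n : Polynomial ℂ) + 1) * legendre n)
    with hp
  have hd : derivative p = 0 := by
    simp only [hp, derivative_sub, derivative_mul, derivative_X, derivative_add,
      derivative_natCast, derivative_ofNat, derivative_one]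
    push_cast at h1 ⊢
    linear_combination ((n : Polynomial ℂ) + 2) * h1 + ((n : Polynomial ℂ) + 1) * h2
  have hpc := Polynomial.eq_C_of_derivative_eq_zero hd
  have he : p.eval 1 = 0 := by
    simp only [hp, eval_sub, eval_mul, eval_add, eval_natCast, eval_ofNat, eval_X, eval_one,
      legendre_eval_one]
    ring
  rw [hpc, eval_C] at he
  have : p = 0 := by rw [hpc, he, map_zero]
  have := sub_eq_zero.mp (hp ▸ this)
  exact this

lemma LI (n : ℕ) : ((n : Polynomial ℂ) + 1) * legendre n =
    ((n : Polynomial ℂ) + 1) * X * legendre (n + 1)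
      - (X ^ 2 - 1) * derivative (legendre (n + 1)) := by
  linear_combination bonnet n - LIp n

lemma bonnet_eval (n : ℕ) (x : ℂ) : ((n : ℂ) + 2) * P (n + 2) x =
    (2 * (n : ℂ) + 3) * x * P (n + 1) x - ((n : ℂ) + 1) * P n x := by
  have h := congrArg (eval x) (bonnet n)
  simpa [P, eval_mul, eval_add, eval_sub] using h

lemma LI_eval (n : ℕ) (x : ℂ) : ((n : ℂ) + 1) * P n x =
    ((n : ℂ) + 1) * x * P (n + 1) x - (x ^ 2 - 1) * P' (n + 1) x := by
  have h := congrArg (eval x) (LI n)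
  simpa [P, P', eval_mul, eval_add, eval_sub] using h

lemma J_inv (z : ℂ) : J (1 / z) = J z := by
  simp [J, one_div, inv_inv]
  ring

lemma G_eq (n : ℕ) (z : ℂ) (hz : z ≠ 0) : G n z =
    ((n : ℂ) + 1) * z ^ (n : ℤ) * P n (J z)
      - z ^ ((n : ℤ) - 1) * (z ^ 2 - 1) / 2 * P' n (J z) := by
  have hzn : z ^ (n : ℕ) ≠ 0 := pow_ne_zero _ hz
  have e1 : (1 / z) ^ ((n : ℤ)) = 1 / z ^ (n : ℕ) := by
    rw [div_zpow, one_zpow, zpow_natCast]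
  have e2 : (1 / z) ^ ((n : ℤ) - 1) = z / z ^ (n : ℕ) := by
    rw [div_zpow, one_zpow, zpow_sub₀ hz, zpow_one, zpow_natCast, one_div, inv_div]
  have e3 : z ^ ((n : ℤ)) = z ^ (n : ℕ) := zpow_natCast z n
  have e4 : z ^ ((n : ℤ) - 1) = z ^ (n : ℕ) / z := by
    rw [zpow_sub₀ hz, zpow_one, zpow_natCast]
  rw [G, F, J_inv, e1, e2, e3, e4, two_mul, pow_add]
  have h1 : z ^ (n:ℕ) * z ^ (n:ℕ) * (((n:ℂ) + 1) * (1 / z ^ (n:ℕ)) * P n (J z))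
      = ((n:ℂ) + 1) * z ^ (n:ℕ) * P n (J z) := by
    field_simp
  have h2 : z ^ (n:ℕ) * z ^ (n:ℕ) * (z / z ^ (n:ℕ) * ((1 / z) ^ 2 - 1) / 2 * P' n (J z))
      = - (z ^ (n:ℕ) / z) * (z ^ 2 - 1) / 2 * P' n (J z) := by
    field_simp
    ring
  linear_combination h1 + h2

lemma key0 (ν z w pn dpn Fv Gv : ℂ)
    (hF : Fv = (ν + 1) * (z * w) * pn + w * (z ^ 2 - 1) / 2 * dpn)
    (hG : Gv = (ν + 1) * (z * w) * pn - w * (z ^ 2 - 1) / 2 * dpn) :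
    2 * (ν + 1) * (z * w * w) * pn = w * Gv + w * Fv := by
  subst hF hG
  ring

lemma key1 (ν z w pm pn dpn Fv Gv : ℂ) (hz : z ≠ 0) (hν : ν ≠ 0)
    (hF : Fv = (ν + 1) * (z * w) * pn + w * (z ^ 2 - 1) / 2 * dpn)
    (hG : Gv = (ν + 1) * (z * w) * pn - w * (z ^ 2 - 1) / 2 * dpn)
    (hLI : 4 * z ^ 2 * ν * pm = 2 * ν * z * (z ^ 2 + 1) * pn - (z ^ 2 - 1) ^ 2 * dpn) :
    2 * (ν + 1) * (z * w * w) * pm =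
      w / z * ((2 * ν + 1) * z ^ 2 - 1) / (2 * ν) * Gv
        + w / z * ((2 * ν + 1) - z ^ 2) / (2 * ν) * Fv := by
  subst hF hG
  field_simp
  linear_combination 2 * (ν + 1) * w ^ 2 * hLI

lemma key2 (ν c x pm pm1 pm2 Z C0 C1 D0 D1 Fv Gv : ℂ) (hc : c ≠ 0)
    (h0 : 2 * (ν + 1) * Z * pm2 = C0 * Gv + D0 * Fv)
    (h1 : 2 * (ν + 1) * Z * pm1 = C1 * Gv + D1 * Fv)
    (hb : (c + 1) * pm2 = (2 * c + 1) * x * pm1 - c * pm) :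
    2 * (ν + 1) * Z * pm =
      ((2 * c + 1) * x * C1 - (c + 1) * C0) / c * Gv
        + ((2 * c + 1) * x * D1 - (c + 1) * D0) / c * Fv := by
  rw [div_mul_eq_mul_div, div_mul_eq_mul_div, ← add_div, eq_div_iff hc]
  linear_combination (2 * c + 1) * x * h1 - (c + 1) * h0 + 2 * (ν + 1) * Z * hb

/-- `2(n+1) z^{2n−1} P_{n−k}(J(z)) = C_k^{(n)}(z) G_n(z) + D_k^{(n)}(z) F_n(z)` for
`n ≥ 1`, `0 ≤ k ≤ n` and `z ≠ 0`. -/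
theorem partial_fraction_lower (n : ℕ) (hn : 1 ≤ n) (k : ℕ) (hk : k ≤ n) (z : ℂ) (hz : z ≠ 0) :
    2 * ((n : ℂ) + 1) * z ^ (2 * (n : ℤ) - 1) * P (n - k) (J z) =
      Cf n k z * G n z + Df n k z * F n z := by
  set w : ℂ := z ^ ((n : ℤ) - 1) with hw
  have t0 : z ^ ((n:ℤ)) = z ^ ((1:ℤ)) * z ^ ((n:ℤ) - 1) := by
    rw [← zpow_add₀ hz]; congr 1; ring
  have ezn : z ^ (n : ℤ) = z * w := by rw [t0, zpow_one, ← hw]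
  have t1 : z ^ (2 * (n:ℤ) - 1) = z ^ ((n:ℤ)) * z ^ ((n:ℤ) - 1) := by
    rw [← zpow_add₀ hz]; congr 1; ring
  have e2n : z ^ (2 * (n : ℤ) - 1) = z * w * w := by rw [t1, ezn, ← hw]
  have t2 : z ^ ((n:ℤ) - 2) = z ^ ((n:ℤ) - 1) * z ^ (-1 : ℤ) := by
    rw [← zpow_add₀ hz]; congr 1; ring
  have en2 : z ^ ((n : ℤ) - 2) = w / z := by
    rw [t2, ← hw, zpow_neg, zpow_one, ← div_eq_mul_inv]
  have hF : F n z = ((n:ℂ) + 1) * (z * w) * P n (J z) + w * (z ^ 2 - 1) / 2 * P' n (J z) := by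
    rw [F, ezn, ← hw]
  have hG : G n z = ((n:ℂ) + 1) * (z * w) * P n (J z) - w * (z ^ 2 - 1) / 2 * P' n (J z) := by
    rw [G_eq n z hz, ezn, ← hw]
  induction k using Nat.twoStepInduction with
  | zero =>
    simp only [Cf, Df, Nat.sub_zero]
    rw [e2n, ← hw]
    linear_combination key0 ((n:ℂ)) z w (P n (J z)) (P' n (J z)) (F n z) (G n z) hF hG
  | one =>
    have hνne : ((n:ℂ)) ≠ 0 := Nat.cast_ne_zero.mpr (by omega)
    have hzz : z * z⁻¹ = 1 := mul_inv_cancel₀ hz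
    have hx := LI_eval (n - 1) (J z)
    rw [show n - 1 + 1 = n from by omega] at hx
    rw [show (((n-1 : ℕ)):ℂ) = (n:ℂ) - 1 from by push_cast [Nat.cast_sub hn]; ring] at hx
    have hJ2 : 2 * z * J z = z ^ 2 + 1 := by
      rw [J]
      field_simp
    have hLI : 4 * z ^ 2 * (n:ℂ) * P (n-1) (J z)
        = 2 * (n:ℂ) * z * (z ^ 2 + 1) * P n (J z) - (z ^ 2 - 1) ^ 2 * P' n (J z) := by
      linear_combination 4 * z ^ 2 * hx
        + (2 * (n:ℂ) * z * P n (J z) - (z ^ 2 + 1 + 2 * z * (J z)) * P' n (J z)) * hJ2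
    simp only [Cf, Df]
    rw [e2n, en2]
    exact key1 ((n:ℂ)) z w (P (n-1) (J z)) (P n (J z)) (P' n (J z)) (F n z) (G n z)
      hz hνne hF hG hLI
  | more k ih1 ih2 =>
    have hm : n - (k + 2) + 2 = n - k := by omega
    have hm1 : n - (k + 2) + 1 = n - (k + 1) := by omega
    set m : ℕ := n - (k + 2) with hmdef
    have hcast : (n:ℂ) - ((k:ℂ) + 1) = (m:ℂ) + 1 := by
      have : n = k + 2 + m := by omega
      rw [this]; push_cast; ring
    have hcne : (n:ℂ) - ((k:ℂ) + 1) ≠ 0 := by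
      rw [hcast]
      intro hcc
      have : ((m:ℂ) + 1) = ((m + 1 : ℕ) : ℂ) := by push_cast; ring
      rw [this] at hcc
      exact Nat.cast_ne_zero.mpr (by omega) hcc
    have h0 := ih1 (by omega)
    have h1 := ih2 (by omega)
    rw [show n - k = m + 2 from by omega] at h0
    rw [show n - (k + 1) = m + 1 from by omega] at h1
    have hb0 := bonnet_eval m (J z)
    have hb : ((n:ℂ) - ((k:ℂ) + 1) + 1) * P (m + 2) (J z)
        = (2 * ((n:ℂ) - ((k:ℂ) + 1)) + 1) * J z * P (m + 1) (J z)
          - ((n:ℂ) - ((k:ℂ) + 1)) * P m (J z) := by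
      rw [hcast]
      linear_combination hb0
    simp only [Cf, Df]
    exact key2 ((n:ℂ)) ((n:ℂ) - ((k:ℂ) + 1)) (J z) (P m (J z)) (P (m + 1) (J z))
      (P (m + 2) (J z)) (z ^ (2 * (n:ℤ) - 1)) (Cf n k z) (Cf n (k + 1) z)
      (Df n k z) (Df n (k + 1) z) (F n z) (G n z) hcne h0 h1 hb
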